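/- Let σ be a relational signature and let φ = ∀x₁…∀x_n ⋀_i θ_i(x₁,…,x_n,y₁,…,y_m), where each θ_i is a first-order literal, a dependence atom, or an independence atom over the displayed variables. Then there exists a first-order sentence ψ' over the signature σ∪{R}, where R is a fresh m-ary relation symbol, such that for every σ-structure 𝔄 and every team X with domain {y₁,…,y_m}: 𝔄⊨_X φ if and only if (𝔄, X(ȳ)) ⊨ ψ', where X(ȳ)={(s(y₁),…,s(y_m)) : s∈X} interprets R. -/

import Mathlib

/- Statement 11.  Let σ be a relational signature and
φ = ∀x₁…∀x_n ⋀_i θ_i(x₁,…,x_n,y₁,…,y_m), where each θ_i is a first-order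
literal, a dependence atom, or an independence atom over the displayed
variables.  Then there is a first-order sentence ψ' over σ ∪ {R} (R a fresh
m-ary relation symbol) such that for every σ-structure 𝔄 and every team X
with domain {y₁,…,y_m}:  𝔄 ⊨_X φ  iff  (𝔄, X(ȳ)) ⊨ ψ', where
X(ȳ) = {(s(y₁),…,s(y_m)) : s ∈ X} interprets R. -/

open FirstOrder

/-- The signature `σ ∪ {R}` obtained from `L` by adding a fresh `m`-ary
relation symbol `R`. -/
def addRel (L : FirstOrder.Language) (m : ℕ) : FirstOrder.Language where
  Functions := L.Functions
  Relations := fun k => L.Relations k ⊕ PLift (k = m)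

/-- The expansion `(𝔄, R)` of an `L`-structure `𝔄` to an
`addRel L m`-structure interpreting the fresh symbol by the `m`-ary relation
`R`. -/
def expandStructure (L : FirstOrder.Language) (m : ℕ) (A : Type*)
    [L.Structure A] (R : (Fin m → A) → Prop) : (addRel L m).Structure A where
  funMap := fun f v => Language.Structure.funMap (L := L) f v
  RelMap := fun {k} r v =>
    match r with
    | Sum.inl r => Language.Structure.RelMap (L := L) r v
    | Sum.inr h => R (fun j => v (Fin.cast h.down.symm j))

/-- Atoms: first-order literals (over relation symbols of `L` and equality),
dependence atoms, and (conditional) independence atoms, with variables from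
`V`. -/
inductive Atom (L : FirstOrder.Language) (V : Type*) : Type _ where
  | rel {k : ℕ} (R : L.Relations k) (ts : Fin k → V)
  | nrel {k : ℕ} (R : L.Relations k) (ts : Fin k → V)
  | eq (a b : V)
  | neq (a b : V)
  | dep (xs : List V) (y : V)
  | indep (xs ys zs : List V)

/-- Team satisfaction of an atom. -/
def atomSat {L : FirstOrder.Language} {V : Type*} (A : Type*) [L.Structure A] :
    Atom L V → Set (V → A) → Prop
  | .rel R ts, X => ∀ s ∈ X, Language.Structure.RelMap R (fun i => s (ts i))
  | .nrel R ts, X => ∀ s ∈ X, ¬ Language.Structure.RelMap R (fun i => s (ts i))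
  | .eq a b, X => ∀ s ∈ X, s a = s b
  | .neq a b, X => ∀ s ∈ X, s a ≠ s b
  | .dep xs y, X => ∀ s ∈ X, ∀ s' ∈ X, xs.map s = xs.map s' → s y = s' y
  | .indep xs ys zs, X => ∀ s ∈ X, ∀ s' ∈ X, zs.map s = zs.map s' →
      ∃ s'' ∈ X, zs.map s'' = zs.map s ∧ xs.map s'' = xs.map s ∧
        ys.map s'' = ys.map s'

namespace Statement11

open FirstOrder Language

variable {L : FirstOrder.Language} {m n : ℕ}

/-- The fresh `m`-ary relation symbol. -/
def freshR (L : FirstOrder.Language) (m : ℕ) : (addRel L m).Relations m :=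
  Sum.inr ⟨rfl⟩

/-- The atomic formula `R (w 0, …, w (m-1))` for the fresh symbol. -/
def Rfm {μ : Type*} (w : Fin m → μ) : (addRel L m).Formula μ :=
  Relations.formula (freshR L m) (fun j => Term.var (w j))

/-- The conjunction of the equalities `f x = g x` for `x ∈ p`. -/
def listEq {μ V : Type*} (p : List V) (f g : V → μ) : (addRel L m).Formula μ :=
  (p.map fun x => (Term.var (f x) : (addRel L m).Term μ).equal
    (Term.var (g x))).foldr (· ⊓ ·) ⊤

lemma realize_Rfm {A : Type} [L.Structure A] (RX : (Fin m → A) → Prop)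
    {μ : Type*} (w : Fin m → μ) (v : μ → A) :
    @Formula.Realize _ A (expandStructure L m A RX) _ (Rfm w) v ↔
      RX (fun j => v (w j)) := by
  letI := expandStructure L m A RX
  rw [Rfm, Formula.realize_rel]
  exact Iff.rfl

lemma list_map_eq {V A : Type*} (p : List V) (f g : V → A) :
    p.map f = p.map g ↔ ∀ x ∈ p, f x = g x := by
  induction p with
  | nil => simp
  | cons a p ih => simp [ih]

lemma realize_listEq {A : Type} [L.Structure A] (RX : (Fin m → A) → Prop)
    {μ V : Type*} (p : List V) (f g : V → μ) (v : μ → A) :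
    @Formula.Realize _ A (expandStructure L m A RX) _ (listEq p f g) v ↔
      p.map (v ∘ f) = p.map (v ∘ g) := by
  letI := expandStructure L m A RX
  rw [listEq, Formula.Realize, BoundedFormula.realize_foldr_inf, list_map_eq]
  constructor
  · intro h x hx
    have := h _ (List.mem_map_of_mem hx)
    simpa using (Formula.realize_equal ..).mp this
  · rintro h φ hφ
    rw [List.mem_map] at hφ
    obtain ⟨x, hx, rfl⟩ := hφ
    exact (Formula.realize_equal ..).mpr (by simpa using h x hx)

/-- The team obtained by universally quantifying the `x`-variables. -/
lemma team_eq {A : Type} (X : Set (Fin m → A)) :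
    {t : (Fin n ⊕ Fin m) → A | ∃ s ∈ X, ∀ j, t (Sum.inr j) = s j} =
      {t : (Fin n ⊕ Fin m) → A | (fun j => t (Sum.inr j)) ∈ X} := by
  ext t
  constructor
  · rintro ⟨s, hs, h⟩
    have : (fun j => t (Sum.inr j)) = s := funext h
    simpa [this] using hs
  · intro h
    exact ⟨_, h, fun j => rfl⟩

/-- The translation for a single atom. -/
lemma atom_fo (n m : ℕ) (θ : Atom L (Fin n ⊕ Fin m)) :
    ∃ ψ : (addRel L m).Sentence,
      ∀ (A : Type) [L.Structure A] (X : Set (Fin m → A)),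
        (atomSat A θ
            {t : (Fin n ⊕ Fin m) → A | ∃ s ∈ X, ∀ j, t (Sum.inr j) = s j}
          ↔ @FirstOrder.Language.Sentence.Realize (addRel L m) A
              (expandStructure L m A (fun v => v ∈ X)) ψ) := by
  let V := Fin n ⊕ Fin m
  cases θ with
  | rel R ts =>
    refine ⟨Formula.iAlls V <| Formula.relabel (Sum.inr : V → Empty ⊕ V) <|
      ((Rfm (fun j => Sum.inr j)).imp
        (Relations.formula (Sum.inl R) (fun i => Term.var (ts i)))), ?_⟩
    intro A _ X
    letI := expandStructure L m A (fun v => v ∈ X)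
    rw [team_eq, Sentence.Realize, Formula.realize_iAlls]
    simp only [Formula.realize_relabel, Sum.elim_comp_inr]
    simp only [atomSat, Set.mem_setOf_eq, Formula.realize_imp, realize_Rfm, Formula.realize_rel,
      Term.realize_var, Sum.elim_inr]
    exact Iff.rfl
  | nrel R ts =>
    refine ⟨Formula.iAlls V <| Formula.relabel (Sum.inr : V → Empty ⊕ V) <|
      ((Rfm (fun j => Sum.inr j)).imp
        (Relations.formula (Sum.inl R) (fun i => Term.var (ts i))).not), ?_⟩
    intro A _ X
    letI := expandStructure L m A (fun v => v ∈ X)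
    rw [team_eq, Sentence.Realize, Formula.realize_iAlls]
    simp only [Formula.realize_relabel, Sum.elim_comp_inr]
    simp only [atomSat, Set.mem_setOf_eq, Formula.realize_imp, realize_Rfm, Formula.realize_not,
      Formula.realize_rel, Term.realize_var, Sum.elim_inr]
    exact Iff.rfl
  | eq a b =>
    refine ⟨Formula.iAlls V <| Formula.relabel (Sum.inr : V → Empty ⊕ V) <|
      ((Rfm (fun j => Sum.inr j)).imp
        ((Term.var a : (addRel L m).Term V).equal (Term.var b))), ?_⟩
    intro A _ X
    letI := expandStructure L m A (fun v => v ∈ X)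
    rw [team_eq, Sentence.Realize, Formula.realize_iAlls]
    simp only [Formula.realize_relabel, Sum.elim_comp_inr]
    simp only [atomSat, Set.mem_setOf_eq, Formula.realize_imp, realize_Rfm, Formula.realize_equal,
      Term.realize_var, Sum.elim_inr]
    exact Iff.rfl

  | neq a b =>
    refine ⟨Formula.iAlls V <| Formula.relabel (Sum.inr : V → Empty ⊕ V) <|
      ((Rfm (fun j => Sum.inr j)).imp
        ((Term.var a : (addRel L m).Term V).equal (Term.var b)).not), ?_⟩
    intro A _ X
    letI := expandStructure L m A (fun v => v ∈ X)
    rw [team_eq, Sentence.Realize, Formula.realize_iAlls]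
    simp only [Formula.realize_relabel, Sum.elim_comp_inr]
    simp only [atomSat, Set.mem_setOf_eq, Formula.realize_imp, realize_Rfm, Formula.realize_not,
      Formula.realize_equal, Term.realize_var, Sum.elim_inr]
    exact Iff.rfl

  | dep xs y =>
    refine ⟨Formula.iAlls (V ⊕ V) <| Formula.relabel (Sum.inr : V ⊕ V → Empty ⊕ (V ⊕ V)) <|
      ((Rfm (fun j => Sum.inl (Sum.inr j)) ⊓ Rfm (fun j => Sum.inr (Sum.inr j))
          ⊓ listEq xs Sum.inl Sum.inr).imp
        ((Term.var (Sum.inl y) : (addRel L m).Term (V ⊕ V)).equal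
          (Term.var (Sum.inr y)))), ?_⟩
    intro A _ X
    letI := expandStructure L m A (fun v => v ∈ X)
    rw [team_eq, Sentence.Realize, Formula.realize_iAlls]
    simp only [Formula.realize_relabel, Sum.elim_comp_inr]
    simp only [atomSat, Set.mem_setOf_eq, Formula.realize_imp, Formula.realize_inf, realize_Rfm,
      realize_listEq, Formula.realize_equal, Term.realize_var, Sum.elim_inr]
    constructor
    · rintro h i ⟨⟨h1, h2⟩, h3⟩
      exact h (i ∘ Sum.inl) h1 (i ∘ Sum.inr) h2 h3
    · intro h s hs s' hs' hmap
      exact h (Sum.elim s s') ⟨⟨hs, hs'⟩, hmap⟩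
  | indep xs ys zs =>
    refine ⟨Formula.iAlls (V ⊕ V) <| Formula.relabel (Sum.inr : V ⊕ V → Empty ⊕ (V ⊕ V)) <|
      ((Rfm (fun j => Sum.inl (Sum.inr j)) ⊓ Rfm (fun j => Sum.inr (Sum.inr j))
          ⊓ listEq zs Sum.inl Sum.inr).imp
        (Formula.iExs V
          (Rfm (fun j => Sum.inr (Sum.inr j))
            ⊓ listEq zs Sum.inr (Sum.inl ∘ Sum.inl)
            ⊓ listEq xs Sum.inr (Sum.inl ∘ Sum.inl)
            ⊓ listEq ys Sum.inr (Sum.inl ∘ Sum.inr)))), ?_⟩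
    intro A _ X
    letI := expandStructure L m A (fun v => v ∈ X)
    rw [team_eq, Sentence.Realize, Formula.realize_iAlls]
    simp only [Formula.realize_relabel, Sum.elim_comp_inr]
    simp only [atomSat, Set.mem_setOf_eq, Formula.realize_imp, Formula.realize_inf, Formula.realize_iExs,
      realize_Rfm, realize_listEq, Sum.elim_inr, id_eq, Function.comp_def]
    constructor
    · rintro h i ⟨⟨h1, h2⟩, h3⟩
      obtain ⟨s'', hs'', hz, hx, hy⟩ := h (i ∘ Sum.inl) h1 (i ∘ Sum.inr) h2 h3
      exact ⟨s'', ⟨⟨hs'', by simpa [Function.comp_def] using hz⟩,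
        by simpa [Function.comp_def] using hx⟩, by simpa [Function.comp_def] using hy⟩
    · intro h s hs s' hs' hmap
      obtain ⟨i, ⟨⟨h1, h2⟩, h3⟩, h4⟩ := h (Sum.elim s s') ⟨⟨hs, hs'⟩, hmap⟩
      exact ⟨i, h1, by simpa using h2, by simpa using h3, by simpa using h4⟩

end Statement11

open Statement11 in
theorem forall_conj_atoms_fo_definable (L : FirstOrder.Language) (n m : ℕ)
    (ι : Type) [Fintype ι] (θ : ι → Atom L (Fin n ⊕ Fin m)) :
    ∃ ψ' : (addRel L m).Sentence,
      ∀ (A : Type) [L.Structure A] (X : Set (Fin m → A)), X.Finite →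
        ((∀ i : ι, atomSat A (θ i)
            {t : (Fin n ⊕ Fin m) → A | ∃ s ∈ X, ∀ j, t (Sum.inr j) = s j})
          ↔ @FirstOrder.Language.Sentence.Realize (addRel L m) A
              (expandStructure L m A (fun v => v ∈ X)) ψ') := by
  choose ψ hψ using fun i => atom_fo n m (θ i)
  refine ⟨(Finset.univ.toList.map ψ).foldr (· ⊓ ·) ⊤, ?_⟩
  intro A _ X _
  letI := expandStructure L m A (fun v => v ∈ X)
  rw [Language.Sentence.Realize, Language.Formula.Realize,
    Language.BoundedFormula.realize_foldr_inf]
  constructor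
  · intro h φ hφ
    rw [List.mem_map] at hφ
    obtain ⟨i, _, rfl⟩ := hφ
    exact (hψ i A X).mp (h i)
  · intro h i
    exact (hψ i A X).mpr
      (h (ψ i) (List.mem_map_of_mem (Finset.mem_toList.mpr (Finset.mem_univ i))))
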